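/- The quantum W1 norm is equivalent to the trace norm with constants 1/2 and n/2: for any X ∈ O_n^T, (1/2)‖X‖₁ ≤ ‖X‖_{W1} ≤ (n/2)‖X‖₁. -/

import Mathlib

open scoped BigOperators
open scoped Classical
open scoped ComplexOrder

noncomputable section

namespace QW1

/-- Configurations of `n` qudits of local dimension `d`:
the index set of the canonical basis of `(ℂ^d)^{⊗ n}`. -/
abbrev Cfg (d n : ℕ) : Type := Fin n → Fin d

/-- Linear operators on the Hilbert space of `n` qudits, represented as matrices
in the canonical basis. -/
abbrev Mat (d n : ℕ) : Type := Matrix (Cfg d n) (Cfg d n) ℂ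

/-- The trace norm `‖A‖₁ = Tr √(Aᴴ A)`. -/
noncomputable def traceNorm {ι : Type} [Fintype ι] [DecidableEq ι] (A : Matrix ι ι ℂ) : ℝ :=
  (((Matrix.posSemidef_conjTranspose_mul_self A).1.eigenvectorUnitary : Matrix ι ι ℂ) *
    Matrix.diagonal (fun i => ((Real.sqrt ((Matrix.posSemidef_conjTranspose_mul_self A).1.eigenvalues i) : ℝ) : ℂ)) *
    (star (Matrix.posSemidef_conjTranspose_mul_self A).1.eigenvectorUnitary : Matrix ι ι ℂ)).trace.re

/-- The operator norm `‖A‖_∞`. -/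
noncomputable def opNorm {ι : Type} [Fintype ι] [DecidableEq ι] (A : Matrix ι ι ℂ) : ℝ :=
  ‖Matrix.toEuclideanCLM (𝕜 := ℂ) A‖

/-- Quantum states: positive semidefinite operators with unit trace. -/
def IsState {ι : Type} [Fintype ι] (ρ : Matrix ι ι ℂ) : Prop :=
  ρ.PosSemidef ∧ ρ.trace = 1

/-- Insert the value `s` at position `i` into a configuration `a` of the remaining qudits. -/
def ins {d n : ℕ} (i : Fin n) (a : {j : Fin n // j ≠ i} → Fin d) (s : Fin d) : Cfg d n :=
  fun j => if h : j = i then s else a ⟨j, h⟩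

/-- The partial trace over the `i`-th qudit. -/
noncomputable def ptrace {d n : ℕ} (i : Fin n) (X : Mat d n) :
    Matrix ({j : Fin n // j ≠ i} → Fin d) ({j : Fin n // j ≠ i} → Fin d) ℂ :=
  fun a b => ∑ s : Fin d, X (ins i a s) (ins i b s)

/-- The marginal of `ρ` on the `i`-th qudit (partial trace over all the other qudits). -/
noncomputable def marginal {d n : ℕ} (i : Fin n) (ρ : Mat d n) :
    Matrix (Fin d) (Fin d) ℂ :=
  fun s t => ∑ a : ({j : Fin n // j ≠ i} → Fin d), ρ (ins i a s) (ins i a t)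

/-- Combine a configuration `s` of the qudits in `I` with a configuration `a` of the rest. -/
def insSet {d n : ℕ} (I : Finset (Fin n)) (a : {j : Fin n // j ∉ I} → Fin d)
    (s : {j : Fin n // j ∈ I} → Fin d) : Cfg d n :=
  fun j => if h : j ∈ I then s ⟨j, h⟩ else a ⟨j, h⟩

/-- The partial trace over the qudits in `I`. -/
noncomputable def ptraceSet {d n : ℕ} (I : Finset (Fin n)) (X : Mat d n) :
    Matrix ({j : Fin n // j ∉ I} → Fin d) ({j : Fin n // j ∉ I} → Fin d) ℂ :=
  fun a b => ∑ s : ({j : Fin n // j ∈ I} → Fin d), X (insSet I a s) (insSet I b s)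

/-- The set of values `(1/2) ∑ i ‖X⁽ⁱ⁾‖₁` over all decompositions `X = ∑ i X⁽ⁱ⁾` with
`X⁽ⁱ⁾` self-adjoint and `Tr_i X⁽ⁱ⁾ = 0`. -/
def W1Set {d n : ℕ} (X : Mat d n) : Set ℝ :=
  { r | ∃ Y : Fin n → Mat d n, (∀ i, (Y i).IsHermitian) ∧ (∀ i, ptrace i (Y i) = 0) ∧
      X = ∑ i, Y i ∧ r = (1 / 2) * ∑ i, traceNorm (Y i) }

/-- The quantum `W₁` norm. -/
noncomputable def W1 {d n : ℕ} (X : Mat d n) : ℝ := sInf (W1Set X)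

/-- The quantum Lipschitz constant: the dual norm of the quantum `W₁` norm. -/
noncomputable def lipschitz {d n : ℕ} (H : Mat d n) : ℝ :=
  sSup { r | ∃ X : Mat d n, X.IsHermitian ∧ X.trace = 0 ∧ W1 X ≤ 1 ∧
    r = ((H * X).trace).re }

/-- Extension `Φ ⊗ id_R` of a map on matrices. -/
def extendMap {A B R : Type} [Fintype A] [Fintype B] [Fintype R]
    (Φ : Matrix A A ℂ → Matrix B B ℂ) (M : Matrix (A × R) (A × R) ℂ) :
    Matrix (B × R) (B × R) ℂ :=
  fun p q => Φ (fun a a' => M (a, p.2) (a', q.2)) p.1 q.1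

/-- Quantum channels: completely positive trace-preserving linear maps. -/
def IsCPTP {A B : Type} [Fintype A] [Fintype B]
    (Φ : Matrix A A ℂ →ₗ[ℂ] Matrix B B ℂ) : Prop :=
  (∀ (k : ℕ) (M : Matrix (A × Fin k) (A × Fin k) ℂ), M.PosSemidef →
    (extendMap (fun N => Φ N) M).PosSemidef) ∧
  ∀ M, (Φ M).trace = M.trace

/-- Action `φ_i ⊗ id` of a single-qudit map `φ` on the `i`-th qudit of `n` qudits. -/
def applyAt {d n : ℕ} (i : Fin n) (φ : Matrix (Fin d) (Fin d) ℂ → Matrix (Fin d) (Fin d) ℂ)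
    (X : Mat d n) : Mat d n :=
  fun a b => φ (fun s t => X (Function.update a i s) (Function.update b i t)) (a i) (b i)

/-- Action `φ_I ⊗ id` of a map `φ` on the qudits in `I`. -/
def applyOn {d n : ℕ} (I : Finset (Fin n))
    (φ : Matrix ({j : Fin n // j ∈ I} → Fin d) ({j : Fin n // j ∈ I} → Fin d) ℂ →
         Matrix ({j : Fin n // j ∈ I} → Fin d) ({j : Fin n // j ∈ I} → Fin d) ℂ)
    (X : Mat d n) : Mat d n :=
  fun a b =>
    φ (fun s t => X (insSet I (fun j => a j) s) (insSet I (fun j => b j) t))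
      (fun j => a j) (fun j => b j)

/-- The operator obtained from `X` by permuting the tensor factors according to `π`. -/
def permuteMat {d n : ℕ} (π : Equiv.Perm (Fin n)) (X : Mat d n) : Mat d n :=
  fun a b => X (a ∘ π) (b ∘ π)

/-- Tensor product of an operator on the first `m` qudits with one on the last `n` qudits. -/
def tensorMN {d m n : ℕ} (A : Mat d m) (B : Mat d n) : Mat d (m + n) :=
  fun a b =>
    A (fun i => a (Fin.castAdd n i)) (fun i => b (Fin.castAdd n i)) *
    B (fun j => a (Fin.natAdd m j)) (fun j => b (Fin.natAdd m j))

/-- Partial trace of an operator on `m + n` qudits over the last `n` qudits. -/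
noncomputable def ptraceLast {d m n : ℕ} (X : Mat d (m + n)) : Mat d m :=
  fun a b => ∑ k : Cfg d n, X (Fin.append a k) (Fin.append b k)

/-- Partial trace of an operator on `m + n` qudits over the first `m` qudits. -/
noncomputable def ptraceFirst {d m n : ℕ} (X : Mat d (m + n)) : Mat d n :=
  fun a b => ∑ k : Cfg d m, X (Fin.append k a) (Fin.append k b)

/-- `n`-fold tensor product `σ₁ ⊗ ⋯ ⊗ σₙ` of single-qudit operators. -/
def tensorAll {d n : ℕ} (σs : Fin n → Matrix (Fin d) (Fin d) ℂ) : Mat d n :=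
  fun a b => ∏ i, σs i (a i) (b i)

/-- `I_d^{(i)} ⊗ K`: the identity on the `i`-th qudit tensored with an operator `K`
on the remaining qudits. -/
def idTensorAt {d n : ℕ} (i : Fin n)
    (K : Matrix ({j : Fin n // j ≠ i} → Fin d) ({j : Fin n // j ≠ i} → Fin d) ℂ) :
    Mat d n :=
  fun a b => if a i = b i then K (fun j => a j) (fun j => b j) else 0

/-- `K ⊗ identity`: an operator acting only on the qudits in `I`. -/
def embedOn {d n : ℕ} (I : Finset (Fin n))
    (K : Matrix ({j : Fin n // j ∈ I} → Fin d) ({j : Fin n // j ∈ I} → Fin d) ℂ) :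
    Mat d n :=
  fun a b => if (∀ j, j ∉ I → a j = b j) then K (fun j => a j) (fun j => b j) else 0

/-- The `n`-th tensor power `φ^{⊗n}` of a single-qudit linear map `φ`. -/
noncomputable def tensorPowMap {d n : ℕ}
    (φ : Matrix (Fin d) (Fin d) ℂ → Matrix (Fin d) (Fin d) ℂ) (X : Mat d n) : Mat d n :=
  fun a b => ∑ s : Cfg d n, ∑ t : Cfg d n,
    X s t * ∏ j, φ (Matrix.single (s j) (t j) 1) (a j) (b j)

/-- The `1 → 1` norm of a map on single-qudit operators. -/
noncomputable def norm1to1 {d : ℕ}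
    (F : Matrix (Fin d) (Fin d) ℂ → Matrix (Fin d) (Fin d) ℂ) : ℝ :=
  sSup { r | ∃ ρ : Matrix (Fin d) (Fin d) ℂ, IsState ρ ∧ r = traceNorm (F ρ) }

/-- The diamond norm of a map on single-qudit operators. -/
noncomputable def diamondNorm {d : ℕ}
    (F : Matrix (Fin d) (Fin d) ℂ → Matrix (Fin d) (Fin d) ℂ) : ℝ :=
  sSup { r | ∃ ρ : Matrix (Fin d × Fin d) (Fin d × Fin d) ℂ, IsState ρ ∧
    r = traceNorm (extendMap F ρ) }

/-- The contraction coefficient (`W₁ → W₁` norm) of a map on `n`-qudit operators. -/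
noncomputable def W1toW1 {d n : ℕ} (Φ : Mat d n → Mat d n) : ℝ :=
  sSup { r | ∃ X : Mat d n, X.IsHermitian ∧ X.trace = 0 ∧ W1 X ≤ 1 ∧ r = W1 (Φ X) }

/-- The von Neumann entropy `S(ρ) = -Tr[ρ ln ρ]` (natural logarithm). -/
noncomputable def vnEntropy {ι : Type} [Fintype ι] [DecidableEq ι] (ρ : Matrix ι ι ℂ) : ℝ :=
  if h : ρ.IsHermitian then -∑ i, h.eigenvalues i * Real.log (h.eigenvalues i) else 0

/-- The logarithm of a self-adjoint matrix, via the spectral decomposition. -/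
noncomputable def matLog {ι : Type} [Fintype ι] [DecidableEq ι] (ρ : Matrix ι ι ℂ) :
    Matrix ι ι ℂ :=
  if h : ρ.IsHermitian then
    (h.eigenvectorUnitary : Matrix ι ι ℂ) *
      Matrix.diagonal (fun i => (Real.log (h.eigenvalues i) : ℂ)) *
      (star (h.eigenvectorUnitary : Matrix ι ι ℂ))
  else 0

/-- The quantum relative entropy `S(ρ‖σ) = Tr[ρ (ln ρ - ln σ)]`. -/
noncomputable def relEntropy {ι : Type} [Fintype ι] [DecidableEq ι]
    (ρ σ : Matrix ι ι ℂ) : ℝ :=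
  ((ρ * (matLog ρ - matLog σ)).trace).re

/-- The Hamming distance between two configurations. -/
def hamming {d n : ℕ} (x y : Cfg d n) : ℕ :=
  (Finset.univ.filter (fun i => x i ≠ y i)).card

/-- Probability distributions on a finite set. -/
def IsProb {α : Type} [Fintype α] (p : α → ℝ) : Prop :=
  (∀ x, 0 ≤ p x) ∧ ∑ x, p x = 1

/-- Couplings of two probability distributions. -/
def IsCoupling {α : Type} [Fintype α] (π : α × α → ℝ) (p q : α → ℝ) : Prop :=
  IsProb π ∧ (∀ x, ∑ y, π (x, y) = p x) ∧ (∀ y, ∑ x, π (x, y) = q y)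

/-- The classical Wasserstein distance of order 1 with respect to the Hamming distance. -/
noncomputable def classicalW1 {d n : ℕ} (p q : Cfg d n → ℝ) : ℝ :=
  sInf { c | ∃ π : Cfg d n × Cfg d n → ℝ, IsCoupling π p q ∧
    c = ∑ x : Cfg d n, ∑ y : Cfg d n, (hamming x y : ℝ) * π (x, y) }

/-- The Lipschitz constant of a function on `[d]^n` with respect to the Hamming distance. -/
noncomputable def classicalLip {d n : ℕ} (f : Cfg d n → ℝ) : ℝ :=
  sSup { r | ∃ x y : Cfg d n, x ≠ y ∧ r = |f x - f y| / (hamming x y : ℝ) }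




section


variable {ι : Type} [Fintype ι] [DecidableEq ι]

open Matrix

open scoped MatrixOrder in
lemma psd_eq_star_mul {P : Matrix ι ι ℂ} (hP : P.PosSemidef) :
    ∃ B : Matrix ι ι ℂ, P = Bᴴ * B := by
  have h0 : 0 ≤ P := Matrix.nonneg_iff_posSemidef.mpr hP
  refine ⟨CFC.sqrt P, ?_⟩
  rw [← Matrix.star_eq_conjTranspose, (IsSelfAdjoint.of_nonneg (CFC.sqrt_nonneg P)).star_eq]
  exact (CFC.sqrt_mul_sqrt_self P h0).symm

open scoped MatrixOrder in
lemma sqrtMat_eq {A S : Matrix ι ι ℂ} (hS : S.PosSemidef) (hsq : S * S = Aᴴ * A) :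
    ((Matrix.posSemidef_conjTranspose_mul_self A).1.eigenvectorUnitary : Matrix ι ι ℂ) *
      Matrix.diagonal (fun i => ((Real.sqrt ((Matrix.posSemidef_conjTranspose_mul_self A).1.eigenvalues i) : ℝ) : ℂ)) *
      (star (Matrix.posSemidef_conjTranspose_mul_self A).1.eigenvectorUnitary : Matrix ι ι ℂ) = S := by
  have h1 := (Matrix.posSemidef_conjTranspose_mul_self A).1.cfc_eq Real.sqrt
  rw [Matrix.IsHermitian.cfc, Unitary.conjStarAlgAut_apply] at h1
  have h0 : 0 ≤ Aᴴ * A := Matrix.nonneg_iff_posSemidef.mpr (Matrix.posSemidef_conjTranspose_mul_self A)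
  have h2 := CFC.sqrt_unique hsq (Matrix.nonneg_iff_posSemidef.mpr hS)
  rw [CFC.sqrt_eq_real_sqrt _ h0, cfcₙ_eq_cfc, h1] at h2
  exact h2

lemma trace_conj {U D : Matrix ι ι ℂ} (hUU : star U * U = 1) :
    (U * D * star U).trace = D.trace := by
  rw [Matrix.trace_mul_cycle, hUU, Matrix.one_mul]

lemma traceNorm_eq_sum_abs {A : Matrix ι ι ℂ} (hA : A.IsHermitian) :
    traceNorm A = ∑ i, |hA.eigenvalues i| := by
  set U : Matrix ι ι ℂ := (hA.eigenvectorUnitary : Matrix ι ι ℂ) with hU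
  have hUU : star U * U = 1 := Unitary.coe_star_mul_self hA.eigenvectorUnitary
  have cancel : ∀ M : Matrix ι ι ℂ, star U * (U * M) = M := fun M => by
    rw [← Matrix.mul_assoc, hUU, Matrix.one_mul]
  set S : Matrix ι ι ℂ :=
    U * diagonal (fun i => Complex.ofReal |hA.eigenvalues i|) * star U with hS
  have hSpsd : S.PosSemidef := by
    refine (posSemidef_diagonal_iff.mpr ?_).mul_mul_conjTranspose_same U
    intro i
    exact_mod_cast Complex.zero_le_real.mpr (abs_nonneg _)
  have hsq : S ^ 2 = Aᴴ * A := by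
    have hAA : Aᴴ = A := hA
    rw [pow_two, hAA, hS]
    conv_rhs => rw [hA.spectral_theorem, Unitary.conjStarAlgAut_apply, ← hU]
    simp only [Matrix.mul_assoc, cancel]
    congr 1
    rw [← Matrix.mul_assoc, ← Matrix.mul_assoc, diagonal_mul_diagonal, diagonal_mul_diagonal]
    have heq : (fun i => Complex.ofReal |hA.eigenvalues i| * Complex.ofReal |hA.eigenvalues i|)
        = fun i => (RCLike.ofReal ∘ hA.eigenvalues) i * (RCLike.ofReal ∘ hA.eigenvalues) i := by
      funext i
      simp only [Function.comp_apply]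
      rw [← Complex.ofReal_mul, abs_mul_abs_self]
      norm_cast
    rw [heq]
  have hkey := (sqrtMat_eq (A := A) hSpsd ((pow_two S).symm.trans hsq)).symm
  have htr : S.trace = ∑ i, Complex.ofReal |hA.eigenvalues i| := by
    rw [hS, trace_conj hUU, trace_diagonal]
  rw [traceNorm, ← hkey, htr]
  simp

lemma traceNorm_zero : traceNorm (0 : Matrix ι ι ℂ) = 0 := by
  have h0 : (0 : Matrix ι ι ℂ).PosSemidef := Matrix.PosSemidef.zero
  have := (sqrtMat_eq (A := (0 : Matrix ι ι ℂ)) h0 (by simp)).symm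
  rw [traceNorm, ← this]
  simp

lemma traceNorm_nonneg' {A : Matrix ι ι ℂ} (hA : A.IsHermitian) : 0 ≤ traceNorm A := by
  rw [traceNorm_eq_sum_abs hA]
  positivity

lemma psd_diag_nonneg {M : Matrix ι ι ℂ} (hM : M.PosSemidef) (i : ι) :
    (0:ℂ) ≤ M i i := by
  exact hM.diag_nonneg

lemma traceNorm_sub_le_of_psd {P Q : Matrix ι ι ℂ} (hP : P.PosSemidef) (hQ : Q.PosSemidef) :
    traceNorm (P - Q) ≤ (P.trace).re + (Q.trace).re := by
  have hA : (P - Q).IsHermitian := hP.1.sub hQ.1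
  rw [traceNorm_eq_sum_abs hA]
  set U : Matrix ι ι ℂ := (hA.eigenvectorUnitary : Matrix ι ι ℂ) with hU
  have hUU : star U * U = 1 := Unitary.coe_star_mul_self hA.eigenvectorUnitary
  have hdiag : star U * (P - Q) * U = diagonal (Complex.ofReal ∘ hA.eigenvalues) :=
    by have h := hA.conjStarAlgAut_star_eigenvectorUnitary; rw [Unitary.conjStarAlgAut_star_apply] at h; exact h
  have hMP : (star U * P * U).PosSemidef := hP.conjTranspose_mul_mul_same U
  have hMQ : (star U * Q * U).PosSemidef := hQ.conjTranspose_mul_mul_same U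
  have hsplit : star U * (P - Q) * U = star U * P * U - star U * Q * U := by
    rw [Matrix.mul_sub, Matrix.sub_mul]
  have heig : ∀ i, ((hA.eigenvalues i : ℝ) : ℂ)
      = (star U * P * U) i i - (star U * Q * U) i i := by
    intro i
    have h1 := congrFun (congrFun (hsplit.symm.trans hdiag) i) i
    simpa [Matrix.sub_apply] using h1.symm
  have hbound : ∀ i, |hA.eigenvalues i|
      ≤ ((star U * P * U) i i).re + ((star U * Q * U) i i).re := by
    intro i
    have hp := psd_diag_nonneg hMP i
    have hq := psd_diag_nonneg hMQ i
    rw [Complex.le_def] at hp hq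
    have hre : hA.eigenvalues i = ((star U * P * U) i i).re - ((star U * Q * U) i i).re := by
      have := congrArg Complex.re (heig i)
      simpa using this
    rw [hre]
    calc |((star U * P * U) i i).re - ((star U * Q * U) i i).re|
        ≤ |((star U * P * U) i i).re| + |((star U * Q * U) i i).re| := abs_sub _ _
      _ = ((star U * P * U) i i).re + ((star U * Q * U) i i).re := by
          rw [abs_of_nonneg hp.1, abs_of_nonneg hq.1]
  calc ∑ i, |hA.eigenvalues i|
      ≤ ∑ i, (((star U * P * U) i i).re + ((star U * Q * U) i i).re) :=
        Finset.sum_le_sum fun i _ => hbound i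
    _ = ((star U * P * U).trace).re + ((star U * Q * U).trace).re := by
        rw [Finset.sum_add_distrib]
        simp [Matrix.trace, Matrix.diag, Complex.re_sum]
    _ = (P.trace).re + (Q.trace).re := by
        have hUU' : U * star U = 1 := Unitary.coe_mul_star_self hA.eigenvectorUnitary
        rw [Matrix.trace_mul_cycle (star U) P U, Matrix.trace_mul_cycle (star U) Q U, hUU',
          Matrix.one_mul, Matrix.one_mul]

end

section
open Matrix
variable {ι : Type} [Fintype ι] [DecidableEq ι]

lemma exists_parts {A : Matrix ι ι ℂ} (hA : A.IsHermitian) :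
    ∃ P Q : Matrix ι ι ℂ, P.PosSemidef ∧ Q.PosSemidef ∧ A = P - Q ∧
      P.trace = Complex.ofReal (∑ i, max (hA.eigenvalues i) 0) ∧
      Q.trace = Complex.ofReal (∑ i, max (-hA.eigenvalues i) 0) ∧
      (P.trace).re + (Q.trace).re = traceNorm A := by
  classical
  set U : Matrix ι ι ℂ := (hA.eigenvectorUnitary : Matrix ι ι ℂ) with hU
  have hUU : star U * U = 1 := Unitary.coe_star_mul_self hA.eigenvectorUnitary
  refine ⟨U * diagonal (fun i => Complex.ofReal (max (hA.eigenvalues i) 0)) * star U,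
    U * diagonal (fun i => Complex.ofReal (max (-hA.eigenvalues i) 0)) * star U, ?_, ?_, ?_, ?_, ?_, ?_⟩
  · refine (posSemidef_diagonal_iff.mpr fun i => ?_).mul_mul_conjTranspose_same U
    exact_mod_cast Complex.zero_le_real.mpr (le_max_right _ _)
  · refine (posSemidef_diagonal_iff.mpr fun i => ?_).mul_mul_conjTranspose_same U
    exact_mod_cast Complex.zero_le_real.mpr (le_max_right _ _)
  · have hD : (diagonal (RCLike.ofReal ∘ hA.eigenvalues) : Matrix ι ι ℂ)
        = diagonal (fun i => Complex.ofReal (max (hA.eigenvalues i) 0))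
          - diagonal (fun i => Complex.ofReal (max (-hA.eigenvalues i) 0)) := by
      have hfun : (RCLike.ofReal ∘ hA.eigenvalues : ι → ℂ)
          = fun i => Complex.ofReal (max (hA.eigenvalues i) 0)
            - Complex.ofReal (max (-hA.eigenvalues i) 0) := by
        funext i
        rw [Function.comp_apply, ← Complex.ofReal_sub, max_zero_sub_max_neg_zero_eq_self]
        norm_cast
      rw [hfun, ← diagonal_sub]
    conv_lhs => rw [hA.spectral_theorem, Unitary.conjStarAlgAut_apply, hD]
    rw [Matrix.mul_sub, Matrix.sub_mul]
  · rw [trace_conj hUU, trace_diagonal]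
    push_cast
    rfl
  · rw [trace_conj hUU, trace_diagonal]
    push_cast
    rfl
  · rw [trace_conj hUU, trace_conj hUU, trace_diagonal, trace_diagonal,
      traceNorm_eq_sum_abs hA]
    rw [← Complex.ofReal_sum, ← Complex.ofReal_sum, Complex.ofReal_re, Complex.ofReal_re,
      ← Finset.sum_add_distrib]
    exact Finset.sum_congr rfl fun i _ => max_zero_add_max_neg_zero_eq_abs_self _

lemma traceNorm_add_le {A B : Matrix ι ι ℂ} (hA : A.IsHermitian) (hB : B.IsHermitian) :
    traceNorm (A + B) ≤ traceNorm A + traceNorm B := by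
  obtain ⟨Pa, Qa, hPa, hQa, hAeq, -, -, htA⟩ := exists_parts hA
  obtain ⟨Pb, Qb, hPb, hQb, hBeq, -, -, htB⟩ := exists_parts hB
  have h : A + B = (Pa + Pb) - (Qa + Qb) := by rw [hAeq, hBeq]; abel
  rw [h]
  calc traceNorm ((Pa + Pb) - (Qa + Qb))
      ≤ ((Pa + Pb).trace).re + ((Qa + Qb).trace).re :=
        traceNorm_sub_le_of_psd (hPa.add hPb) (hQa.add hQb)
    _ = traceNorm A + traceNorm B := by
        rw [Matrix.trace_add, Matrix.trace_add, Complex.add_re, Complex.add_re, ← htA, ← htB]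
        ring

lemma traceNorm_sum_le {κ : Type} [Fintype κ] (f : κ → Matrix ι ι ℂ)
    (h : ∀ i, (f i).IsHermitian) :
    traceNorm (∑ i, f i) ≤ ∑ i, traceNorm (f i) := by
  classical
  have H : ∀ s : Finset κ, traceNorm (∑ i ∈ s, f i) ≤ ∑ i ∈ s, traceNorm (f i) := by
    intro s
    induction s using Finset.cons_induction with
    | empty => simp [traceNorm_zero]
    | cons a s ha ih =>
        rw [Finset.sum_cons, Finset.sum_cons]
        have hsum : (∑ i ∈ s, f i).IsHermitian := by
          show (∑ i ∈ s, f i)ᴴ = _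
          rw [Matrix.conjTranspose_sum]
          exact Finset.sum_congr rfl fun i _ => h i
        exact le_trans (traceNorm_add_le (h a) hsum) (by linarith)
  exact H Finset.univ

end

section
open Matrix
variable {ι : Type} [Fintype ι] [DecidableEq ι]

lemma trace_eq_sum_eigenvalues {A : Matrix ι ι ℂ} (hA : A.IsHermitian) :
    A.trace = Complex.ofReal (∑ i, hA.eigenvalues i) := by
  have hUU : star (hA.eigenvectorUnitary : Matrix ι ι ℂ) * (hA.eigenvectorUnitary : Matrix ι ι ℂ) = 1 :=
    Unitary.coe_star_mul_self hA.eigenvectorUnitary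
  conv_lhs => rw [hA.spectral_theorem, Unitary.conjStarAlgAut_apply]
  rw [trace_conj hUU, trace_diagonal, Complex.ofReal_sum]
  rfl

lemma eq_zero_of_traceNorm_eq_zero {A : Matrix ι ι ℂ} (hA : A.IsHermitian)
    (h : traceNorm A = 0) : A = 0 := by
  rw [traceNorm_eq_sum_abs hA] at h
  have hz : ∀ i, hA.eigenvalues i = 0 := by
    intro i
    have := (Finset.sum_eq_zero_iff_of_nonneg (fun i _ => abs_nonneg _)).mp h i (Finset.mem_univ i)
    exact abs_eq_zero.mp this
  have hD : (diagonal (RCLike.ofReal ∘ hA.eigenvalues) : Matrix ι ι ℂ) = 0 := by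
    have : (RCLike.ofReal ∘ hA.eigenvalues : ι → ℂ) = fun _ => 0 := by
      funext i; simp [hz i]
    rw [this]
    simp [Matrix.diagonal_zero]
  conv_lhs => rw [hA.spectral_theorem, hD]
  simp

end

section

variable {d n : ℕ}

def merge (k : ℕ) (x y : Cfg d n) : Cfg d n := fun j => if (j : ℕ) < k then x j else y j

lemma merge_zero (x y : Cfg d n) : merge 0 x y = y := by
  funext j; simp [merge]

lemma merge_ge {k : ℕ} (hk : n ≤ k) (x y : Cfg d n) : merge k x y = x := by
  funext j; simp [merge, lt_of_lt_of_le j.2 hk]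

lemma merge_merge_left (k : ℕ) (x y u : Cfg d n) :
    merge k (merge k x y) u = merge k x u := by
  funext j; by_cases h : (j : ℕ) < k <;> simp [merge, h]

lemma merge_merge_right (k : ℕ) (v x y : Cfg d n) :
    merge k v (merge k x y) = merge k v y := by
  funext j; by_cases h : (j : ℕ) < k <;> simp [merge, h]

def mergePairEquiv (k : ℕ) : (Cfg d n × Cfg d n) ≃ (Cfg d n × Cfg d n) :=
  Function.Involutive.toPerm (fun p => (merge k p.1 p.2, merge k p.2 p.1)) (by
    rintro ⟨x, y⟩
    simp only [Prod.mk.injEq]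
    constructor
    · funext j; by_cases h : (j : ℕ) < k <;> simp [merge, h]
    · funext j; by_cases h : (j : ℕ) < k <;> simp [merge, h])

lemma card_cfg : (Fintype.card (Cfg d n) : ℂ) = (d : ℂ) ^ n := by
  rw [Fintype.card_fun]
  push_cast
  simp

lemma sum_merge (k : ℕ) (F : Cfg d n → ℂ) :
    ∑ x : Cfg d n, ∑ y : Cfg d n, F (merge k x y) = (d : ℂ) ^ n * ∑ a, F a := by
  have h1 : ∑ x : Cfg d n, ∑ y : Cfg d n, F (merge k x y)
      = ∑ p : Cfg d n × Cfg d n, F ((mergePairEquiv k p).1) := by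
    rw [Fintype.sum_prod_type]
    rfl
  rw [h1, Equiv.sum_comp (mergePairEquiv k) (fun p => F p.1), Fintype.sum_prod_type]
  simp [Finset.sum_const, card_cfg, mul_comm]
  rw [Finset.mul_sum]
  congr 1
  funext x
  rw [← card_cfg]
  ring

def updateEquiv (i : Fin n) : (Fin d × Cfg d n) ≃ (Fin d × Cfg d n) :=
  Function.Involutive.toPerm (fun p => (p.2 i, Function.update p.2 i p.1)) (by
    rintro ⟨s, u⟩
    simp only [Function.update_self, Prod.mk.injEq]
    constructor
    · simp
    · rw [Function.update_idem, Function.update_eq_self])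

lemma sum_update (i : Fin n) (H : Cfg d n → ℂ) :
    ∑ s : Fin d, ∑ u : Cfg d n, H (Function.update u i s) = (d : ℂ) * ∑ u, H u := by
  have h1 : ∑ s : Fin d, ∑ u : Cfg d n, H (Function.update u i s)
      = ∑ p : Fin d × Cfg d n, H ((updateEquiv i p).2) := by
    rw [Fintype.sum_prod_type]
    rfl
  rw [h1, Equiv.sum_comp (updateEquiv i) (fun p => H p.2), Fintype.sum_prod_type]
  simp [Finset.sum_const]

end

section
open Matrix
variable {d n : ℕ}

def fA (k : ℕ) (M : Mat d n) : Mat d n :=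
  fun a b => ∑ u : Cfg d n, M (merge k a u) (merge k b u)

def gA (k : ℕ) (M : Mat d n) : Mat d n :=
  fun a b => ∑ v : Cfg d n, M (merge k v a) (merge k v b)

def omegaM (c : ℝ) (Q P : Mat d n) (k : ℕ) : Mat d n :=
  fun a b => (c : ℂ) * (fA k Q a b * gA k P a b)

lemma fA_zero (M : Mat d n) (a b : Cfg d n) : fA 0 M a b = M.trace := by
  rw [fA, Matrix.trace]
  exact Finset.sum_congr rfl fun u _ => by rw [merge_zero, merge_zero]; rfl

lemma gA_zero (M : Mat d n) (a b : Cfg d n) : gA 0 M a b = (d : ℂ) ^ n * M a b := by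
  rw [gA]
  have : ∀ v : Cfg d n, M (merge 0 v a) (merge 0 v b) = M a b := fun v => by
    rw [merge_zero, merge_zero]
  rw [Finset.sum_congr rfl fun v _ => this v, Finset.sum_const, nsmul_eq_mul,
    Finset.card_univ, card_cfg]

lemma fA_top (M : Mat d n) (a b : Cfg d n) : fA n M a b = (d : ℂ) ^ n * M a b := by
  rw [fA]
  have : ∀ u : Cfg d n, M (merge n a u) (merge n b u) = M a b := fun u => by
    rw [merge_ge le_rfl, merge_ge le_rfl]
  rw [Finset.sum_congr rfl fun u _ => this u, Finset.sum_const, nsmul_eq_mul,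
    Finset.card_univ, card_cfg]

lemma gA_top (M : Mat d n) (a b : Cfg d n) : gA n M a b = M.trace := by
  rw [gA, Matrix.trace]
  exact Finset.sum_congr rfl fun v _ => by rw [merge_ge le_rfl, merge_ge le_rfl]; rfl

lemma fA_merge (k : ℕ) (M : Mat d n) (x y x' y' : Cfg d n) :
    fA k M (merge k x y) (merge k x' y') = fA k M x x' := by
  rw [fA, fA]
  exact Finset.sum_congr rfl fun u _ => by rw [merge_merge_left, merge_merge_left]

lemma gA_merge (k : ℕ) (M : Mat d n) (x y x' y' : Cfg d n) :
    gA k M (merge k x y) (merge k x' y') = gA k M y y' := by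
  rw [gA, gA]
  exact Finset.sum_congr rfl fun v _ => by rw [merge_merge_right, merge_merge_right]

lemma sum_fA_diag (k : ℕ) (M : Mat d n) :
    ∑ x : Cfg d n, fA k M x x = (d : ℂ) ^ n * M.trace := by
  have h := sum_merge (d := d) (n := n) k (fun a => M a a)
  simpa [fA, Matrix.trace, Matrix.diag] using h

lemma sum_gA_diag (k : ℕ) (M : Mat d n) :
    ∑ y : Cfg d n, gA k M y y = (d : ℂ) ^ n * M.trace := by
  have h := sum_merge (d := d) (n := n) k (fun a => M a a)
  rw [show (∑ y : Cfg d n, gA k M y y)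
      = ∑ v : Cfg d n, ∑ y : Cfg d n, M (merge k v y) (merge k v y) from Finset.sum_comm]
  simpa [Matrix.trace, Matrix.diag] using h

lemma trace_omegaM (c : ℝ) (Q P : Mat d n) (k : ℕ) (hd : 0 < d) :
    (omegaM c Q P k).trace = (c : ℂ) * ((d : ℂ) ^ n * (Q.trace * P.trace)) := by
  have hdn : ((d : ℂ) ^ n) ≠ 0 := pow_ne_zero _ (by exact_mod_cast hd.ne')
  apply mul_left_cancel₀ hdn
  have key : (d : ℂ) ^ n * ∑ a : Cfg d n, fA k Q a a * gA k P a a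
      = ((d : ℂ) ^ n * Q.trace) * ((d : ℂ) ^ n * P.trace) := by
    rw [← sum_merge k (fun a => fA k Q a a * gA k P a a)]
    have : ∀ x y : Cfg d n, fA k Q (merge k x y) (merge k x y) * gA k P (merge k x y) (merge k x y)
        = fA k Q x x * gA k P y y := fun x y => by rw [fA_merge, gA_merge]
    calc ∑ x : Cfg d n, ∑ y : Cfg d n,
          fA k Q (merge k x y) (merge k x y) * gA k P (merge k x y) (merge k x y)
        = ∑ x : Cfg d n, ∑ y : Cfg d n, fA k Q x x * gA k P y y :=
          Finset.sum_congr rfl fun x _ => Finset.sum_congr rfl fun y _ => this x y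
      _ = (∑ x : Cfg d n, fA k Q x x) * (∑ y : Cfg d n, gA k P y y) := by
          rw [Finset.sum_mul_sum]
      _ = ((d : ℂ) ^ n * Q.trace) * ((d : ℂ) ^ n * P.trace) := by
          rw [sum_fA_diag, sum_gA_diag]
  have htr : (omegaM c Q P k).trace = (c : ℂ) * ∑ a : Cfg d n, fA k Q a a * gA k P a a := by
    rw [Matrix.trace, Finset.mul_sum]
    rfl
  rw [htr, show (d:ℂ)^n * ((c:ℂ) * ∑ a : Cfg d n, fA k Q a a * gA k P a a)
      = (c:ℂ) * ((d:ℂ)^n * ∑ a : Cfg d n, fA k Q a a * gA k P a a) from by ring, key]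
  ring

end

section
open Matrix
variable {d n : ℕ}

lemma omegaM_posSemidef {c : ℝ} (hc : 0 ≤ c) {Q P : Mat d n} (hQ : Q.PosSemidef)
    (hP : P.PosSemidef) (k : ℕ) : (omegaM c Q P k).PosSemidef := by
  obtain ⟨B, hB⟩ := psd_eq_star_mul hP
  obtain ⟨C, hC⟩ := psd_eq_star_mul hQ
  set γ : ℂ := (Real.sqrt c : ℂ) with hγ
  set E : Matrix ((Cfg d n × Cfg d n) × (Cfg d n × Cfg d n)) (Cfg d n) ℂ :=
    fun w a => γ * (C w.1.1 (merge k a w.1.2) * B w.2.1 (merge k w.2.2 a)) with hE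
  have key : omegaM c Q P k = Eᴴ * E := by
    funext a b
    show (c : ℂ) * (fA k Q a b * gA k P a b) = ∑ w, (Eᴴ) a w * E w b
    have hfa : fA k Q a b = ∑ p : Cfg d n × Cfg d n,
        (starRingEnd ℂ) (C p.1 (merge k a p.2)) * C p.1 (merge k b p.2) := by
      rw [fA, Fintype.sum_prod_type]
      rw [Finset.sum_comm]
      refine Finset.sum_congr rfl fun u _ => ?_
      rw [hC]
      show ∑ r, (Cᴴ) (merge k a u) r * C r (merge k b u) = _
      refine Finset.sum_congr rfl fun r _ => ?_
      rfl
    have hga : gA k P a b = ∑ p : Cfg d n × Cfg d n,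
        (starRingEnd ℂ) (B p.1 (merge k p.2 a)) * B p.1 (merge k p.2 b) := by
      rw [gA, Fintype.sum_prod_type]
      rw [Finset.sum_comm]
      refine Finset.sum_congr rfl fun v _ => ?_
      rw [hB]
      show ∑ r, (Bᴴ) (merge k v a) r * B r (merge k v b) = _
      refine Finset.sum_congr rfl fun r _ => ?_
      rfl
    have hγ2 : (starRingEnd ℂ) γ * γ = (c : ℂ) := by
      rw [hγ]
      rw [Complex.conj_ofReal, ← Complex.ofReal_mul, Real.mul_self_sqrt hc]
    have hsummand : ∀ w1 w2 : Cfg d n × Cfg d n,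
        (Eᴴ) a (w1, w2) * E (w1, w2) b
        = (c:ℂ) * (((starRingEnd ℂ) (C w1.1 (merge k a w1.2)) * C w1.1 (merge k b w1.2))
            * ((starRingEnd ℂ) (B w2.1 (merge k w2.2 a)) * B w2.1 (merge k w2.2 b))) := by
      intro w1 w2
      show (starRingEnd ℂ) (E (w1, w2) a) * E (w1, w2) b = _
      rw [hE]
      simp only [_root_.map_mul]
      rw [← hγ2]
      ring
    have hrhs : (∑ w : (Cfg d n × Cfg d n) × (Cfg d n × Cfg d n), (Eᴴ) a w * E w b)
        = (c:ℂ) * ((∑ p : Cfg d n × Cfg d n,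
            (starRingEnd ℂ) (C p.1 (merge k a p.2)) * C p.1 (merge k b p.2))
          * (∑ p : Cfg d n × Cfg d n,
            (starRingEnd ℂ) (B p.1 (merge k p.2 a)) * B p.1 (merge k p.2 b))) := by
      rw [Fintype.sum_prod_type]
      calc ∑ w1 : Cfg d n × Cfg d n, ∑ w2 : Cfg d n × Cfg d n, (Eᴴ) a (w1, w2) * E (w1, w2) b
          = ∑ w1 : Cfg d n × Cfg d n, ∑ w2 : Cfg d n × Cfg d n,
            (c:ℂ) * (((starRingEnd ℂ) (C w1.1 (merge k a w1.2)) * C w1.1 (merge k b w1.2))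
              * ((starRingEnd ℂ) (B w2.1 (merge k w2.2 a)) * B w2.1 (merge k w2.2 b))) :=
            Finset.sum_congr rfl fun w1 _ => Finset.sum_congr rfl fun w2 _ => hsummand w1 w2
        _ = (c:ℂ) * ∑ w1 : Cfg d n × Cfg d n, ∑ w2 : Cfg d n × Cfg d n,
            (((starRingEnd ℂ) (C w1.1 (merge k a w1.2)) * C w1.1 (merge k b w1.2))
              * ((starRingEnd ℂ) (B w2.1 (merge k w2.2 a)) * B w2.1 (merge k w2.2 b))) := by
            rw [Finset.mul_sum]
            exact Finset.sum_congr rfl fun w1 _ => by rw [Finset.mul_sum]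
        _ = _ := by rw [← Finset.sum_mul_sum]
    rw [hfa, hga, hrhs]
  rw [key]
  exact posSemidef_conjTranspose_mul_self E

end

section
open Matrix
variable {d n : ℕ}

lemma ins_apply_ne {i : Fin n} (a : {j : Fin n // j ≠ i} → Fin d) (s : Fin d)
    {j : Fin n} (h : j ≠ i) : ins i a s j = a ⟨j, h⟩ := by
  rw [ins, dif_neg h]

lemma ins_apply_eq {i : Fin n} (a : {j : Fin n // j ≠ i} → Fin d) (s : Fin d) :
    ins i a s i = s := by
  rw [ins, dif_pos rfl]

lemma merge_ins_low {i : Fin n} (a : {j : Fin n // j ≠ i} → Fin d) (s s' : Fin d)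
    (u : Cfg d n) : merge (i : ℕ) (ins i a s) u = merge (i : ℕ) (ins i a s') u := by
  funext j
  by_cases h : (j : ℕ) < (i : ℕ)
  · have hne : j ≠ i := fun he => by subst he; exact lt_irrefl _ h
    simp [merge, h, ins_apply_ne a s hne, ins_apply_ne a s' hne]
  · simp [merge, h]

lemma merge_ins_high {i : Fin n} (a : {j : Fin n // j ≠ i} → Fin d) (s s' : Fin d)
    (v : Cfg d n) : merge ((i : ℕ) + 1) v (ins i a s) = merge ((i : ℕ) + 1) v (ins i a s') := by
  funext j
  by_cases h : (j : ℕ) < (i : ℕ) + 1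
  · simp [merge, h]
  · have hne : j ≠ i := fun he => by subst he; omega
    simp [merge, h, ins_apply_ne a s hne, ins_apply_ne a s' hne]

lemma merge_succ_ins {i : Fin n} (a : {j : Fin n // j ≠ i} → Fin d) (s s₀ : Fin d)
    (u : Cfg d n) :
    merge ((i : ℕ) + 1) (ins i a s) u
      = merge (i : ℕ) (ins i a s₀) (Function.update u i s) := by
  funext j
  rcases lt_trichotomy ((j : ℕ)) ((i : ℕ)) with h | h | h
  · have hne : j ≠ i := fun he => by subst he; omega
    simp [merge, ins_apply_ne a s hne, ins_apply_ne a s₀ hne, h, Nat.lt_succ_of_lt h]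
  · have he : j = i := Fin.ext h
    subst he
    simp [merge, Nat.lt_succ_self, ins_apply_eq, Function.update_self]
  · have hne : j ≠ i := fun he => by subst he; omega
    have h1 : ¬ ((j : ℕ) < (i : ℕ) + 1) := by omega
    have h2 : ¬ ((j : ℕ) < (i : ℕ)) := by omega
    simp [merge, h1, h2, Function.update_of_ne hne]

lemma merge_ins_succ {i : Fin n} (a : {j : Fin n // j ≠ i} → Fin d) (s s₀ : Fin d)
    (v : Cfg d n) :
    merge (i : ℕ) v (ins i a s)
      = merge ((i : ℕ) + 1) (Function.update v i s) (ins i a s₀) := by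
  funext j
  rcases lt_trichotomy ((j : ℕ)) ((i : ℕ)) with h | h | h
  · have hne : j ≠ i := fun he => by subst he; omega
    simp [merge, h, Nat.lt_succ_of_lt h, Function.update_of_ne hne]
  · have he : j = i := Fin.ext h
    subst he
    simp [merge, Nat.lt_succ_self, ins_apply_eq, Function.update_self]
  · have hne : j ≠ i := fun he => by subst he; omega
    have h1 : ¬ ((j : ℕ) < (i : ℕ) + 1) := by omega
    have h2 : ¬ ((j : ℕ) < (i : ℕ)) := by omega
    simp [merge, h1, h2, ins_apply_ne a s hne, ins_apply_ne a s₀ hne]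

lemma sum_fA_succ_ins {i : Fin n} (Q : Mat d n) (a b : {j : Fin n // j ≠ i} → Fin d)
    (s₀ : Fin d) :
    ∑ s : Fin d, fA ((i : ℕ) + 1) Q (ins i a s) (ins i b s)
      = (d : ℂ) * fA (i : ℕ) Q (ins i a s₀) (ins i b s₀) := by
  have h1 : ∀ s : Fin d, fA ((i : ℕ) + 1) Q (ins i a s) (ins i b s)
      = ∑ u : Cfg d n, Q (merge (i : ℕ) (ins i a s₀) (Function.update u i s))
          (merge (i : ℕ) (ins i b s₀) (Function.update u i s)) := by
    intro s
    exact Finset.sum_congr rfl fun u _ => by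
      rw [merge_succ_ins a s s₀ u, merge_succ_ins b s s₀ u]
  calc ∑ s : Fin d, fA ((i : ℕ) + 1) Q (ins i a s) (ins i b s)
      = ∑ s : Fin d, ∑ u : Cfg d n,
          Q (merge (i : ℕ) (ins i a s₀) (Function.update u i s))
            (merge (i : ℕ) (ins i b s₀) (Function.update u i s)) :=
        Finset.sum_congr rfl fun s _ => h1 s
    _ = (d : ℂ) * ∑ u : Cfg d n,
          Q (merge (i : ℕ) (ins i a s₀) u) (merge (i : ℕ) (ins i b s₀) u) :=
        sum_update i (fun w => Q (merge (i : ℕ) (ins i a s₀) w) (merge (i : ℕ) (ins i b s₀) w))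
    _ = (d : ℂ) * fA (i : ℕ) Q (ins i a s₀) (ins i b s₀) := rfl

lemma sum_gA_ins {i : Fin n} (P : Mat d n) (a b : {j : Fin n // j ≠ i} → Fin d)
    (s₀ : Fin d) :
    ∑ s : Fin d, gA (i : ℕ) P (ins i a s) (ins i b s)
      = (d : ℂ) * gA ((i : ℕ) + 1) P (ins i a s₀) (ins i b s₀) := by
  have h1 : ∀ s : Fin d, gA (i : ℕ) P (ins i a s) (ins i b s)
      = ∑ v : Cfg d n, P (merge ((i : ℕ) + 1) (Function.update v i s) (ins i a s₀))
          (merge ((i : ℕ) + 1) (Function.update v i s) (ins i b s₀)) := by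
    intro s
    exact Finset.sum_congr rfl fun v _ => by
      rw [merge_ins_succ a s s₀ v, merge_ins_succ b s s₀ v]
  calc ∑ s : Fin d, gA (i : ℕ) P (ins i a s) (ins i b s)
      = ∑ s : Fin d, ∑ v : Cfg d n,
          P (merge ((i : ℕ) + 1) (Function.update v i s) (ins i a s₀))
            (merge ((i : ℕ) + 1) (Function.update v i s) (ins i b s₀)) :=
        Finset.sum_congr rfl fun s _ => h1 s
    _ = (d : ℂ) * ∑ v : Cfg d n,
          P (merge ((i : ℕ) + 1) v (ins i a s₀)) (merge ((i : ℕ) + 1) v (ins i b s₀)) :=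
        sum_update i (fun w => P (merge ((i : ℕ) + 1) w (ins i a s₀))
          (merge ((i : ℕ) + 1) w (ins i b s₀)))
    _ = (d : ℂ) * gA ((i : ℕ) + 1) P (ins i a s₀) (ins i b s₀) := rfl

lemma ptrace_omegaM_eq (hd : 0 < d) (c : ℝ) (Q P : Mat d n) (i : Fin n) :
    ptrace i (omegaM c Q P (i : ℕ)) = ptrace i (omegaM c Q P ((i : ℕ) + 1)) := by
  have s₀ : Fin d := ⟨0, hd⟩
  funext a b
  have hfi : ∀ s : Fin d, fA (i : ℕ) Q (ins i a s) (ins i b s)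
      = fA (i : ℕ) Q (ins i a s₀) (ins i b s₀) := fun s =>
    Finset.sum_congr rfl fun u _ => by
      rw [merge_ins_low a s s₀ u, merge_ins_low b s s₀ u]
  have hgi : ∀ s : Fin d, gA ((i : ℕ) + 1) P (ins i a s) (ins i b s)
      = gA ((i : ℕ) + 1) P (ins i a s₀) (ins i b s₀) := fun s =>
    Finset.sum_congr rfl fun v _ => by
      rw [merge_ins_high a s s₀ v, merge_ins_high b s s₀ v]
  show ∑ s : Fin d, (c : ℂ) * (fA (i : ℕ) Q (ins i a s) (ins i b s)
        * gA (i : ℕ) P (ins i a s) (ins i b s))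
      = ∑ s : Fin d, (c : ℂ) * (fA ((i : ℕ) + 1) Q (ins i a s) (ins i b s)
        * gA ((i : ℕ) + 1) P (ins i a s) (ins i b s))
  calc ∑ s : Fin d, (c : ℂ) * (fA (i : ℕ) Q (ins i a s) (ins i b s)
        * gA (i : ℕ) P (ins i a s) (ins i b s))
      = (c : ℂ) * ∑ s : Fin d, (fA (i : ℕ) Q (ins i a s₀) (ins i b s₀)
          * gA (i : ℕ) P (ins i a s) (ins i b s)) := by
        rw [Finset.mul_sum]
        exact Finset.sum_congr rfl fun s _ => by rw [hfi s]
    _ = (c : ℂ) * (fA (i : ℕ) Q (ins i a s₀) (ins i b s₀)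
          * ∑ s : Fin d, gA (i : ℕ) P (ins i a s) (ins i b s)) := by
        congr 1
        rw [Finset.mul_sum]
    _ = (c : ℂ) * (fA (i : ℕ) Q (ins i a s₀) (ins i b s₀)
          * ((d : ℂ) * gA ((i : ℕ) + 1) P (ins i a s₀) (ins i b s₀))) := by
        rw [sum_gA_ins P a b s₀]
    _ = (c : ℂ) * (((d : ℂ) * fA (i : ℕ) Q (ins i a s₀) (ins i b s₀))
          * gA ((i : ℕ) + 1) P (ins i a s₀) (ins i b s₀)) := by ring
    _ = (c : ℂ) * ((∑ s : Fin d, fA ((i : ℕ) + 1) Q (ins i a s) (ins i b s))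
          * gA ((i : ℕ) + 1) P (ins i a s₀) (ins i b s₀)) := by
        rw [sum_fA_succ_ins Q a b s₀]
    _ = (c : ℂ) * ∑ s : Fin d, (fA ((i : ℕ) + 1) Q (ins i a s) (ins i b s)
          * gA ((i : ℕ) + 1) P (ins i a s₀) (ins i b s₀)) := by
        congr 1
        rw [Finset.sum_mul]
    _ = ∑ s : Fin d, (c : ℂ) * (fA ((i : ℕ) + 1) Q (ins i a s) (ins i b s)
          * gA ((i : ℕ) + 1) P (ins i a s) (ins i b s)) := by
        rw [Finset.mul_sum]
        exact Finset.sum_congr rfl fun s _ => by rw [hgi s]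

end


section
open Matrix

lemma ptrace_sub {d n : ℕ} (i : Fin n) (A B : Mat d n) :
    ptrace i (A - B) = ptrace i A - ptrace i B := by
  funext a b
  show (∑ s : Fin d, (A - B) (ins i a s) (ins i b s))
      = (∑ s : Fin d, A (ins i a s) (ins i b s)) - ∑ s : Fin d, B (ins i a s) (ins i b s)
  rw [← Finset.sum_sub_distrib]
  rfl

lemma exists_decomp {d n : ℕ} (hd : 2 ≤ d) (X : Mat d n) (hX : X.IsHermitian)
    (hXtr : X.trace = 0) :
    ∃ Y : Fin n → Mat d n, (∀ i, (Y i).IsHermitian) ∧ (∀ i, ptrace i (Y i) = 0) ∧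
      X = ∑ i, Y i ∧ ∑ i, traceNorm (Y i) ≤ (n : ℝ) * traceNorm X := by
  classical
  have hd0 : 0 < d := by omega
  by_cases hXz : X = 0
  · refine ⟨fun _ => 0, fun i => ?_, fun i => ?_, ?_, ?_⟩
    · exact Matrix.isHermitian_zero
    · funext a b
      show (∑ s : Fin d, (0 : Mat d n) (ins i a s) (ins i b s)) = 0
      simp [Matrix.zero_apply]
    · rw [hXz]
      simp
    · rw [hXz, traceNorm_zero]
      simp [traceNorm_zero]
  · obtain ⟨P, Q, hP, hQ, hXPQ, htrP, htrQ, hsumPQ⟩ := exists_parts hX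
    set t : ℝ := ∑ i, max (hX.eigenvalues i) 0 with ht
    set t' : ℝ := ∑ i, max (-hX.eigenvalues i) 0 with ht'
    have htt' : t = t' := by
      have h1 : X.trace = P.trace - Q.trace := by rw [hXPQ, Matrix.trace_sub]
      have h2 : (Complex.ofReal t) - (Complex.ofReal t') = 0 := by
        rw [← htrP, ← htrQ, ← h1, hXtr]
      have := sub_eq_zero.mp h2
      exact_mod_cast this
    have h2t : t + t = traceNorm X := by
      have := hsumPQ
      rw [htrP, htrQ, Complex.ofReal_re, Complex.ofReal_re] at this
      rw [← htt'] at this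
      exact this
    have htn_pos : 0 < traceNorm X := by
      rcases lt_or_eq_of_le (traceNorm_nonneg' hX) with h | h
      · exact h
      · exact absurd (eq_zero_of_traceNorm_eq_zero hX h.symm) hXz
    have htpos : 0 < t := by linarith
    set c : ℝ := (t * (d : ℝ) ^ n)⁻¹ with hc
    have hcpos : 0 < c := by
      apply inv_pos.mpr
      positivity
    have hcancel : (c : ℂ) * (t : ℂ) * ((d : ℂ) ^ n) = 1 := by
      have hne : (t * (d : ℝ) ^ n) ≠ 0 := by positivity
      push_cast [hc]
      rw [mul_assoc]
      exact inv_mul_cancel₀ (by exact_mod_cast hne)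
    set g : ℕ → Mat d n := omegaM c Q P with hg
    have homega0 : g 0 = P := by
      funext a b
      show (c : ℂ) * (fA 0 Q a b * gA 0 P a b) = P a b
      rw [fA_zero, gA_zero, htrQ, ← htt']
      calc (c : ℂ) * ((t : ℂ) * ((d : ℂ) ^ n * P a b))
          = ((c : ℂ) * (t : ℂ) * ((d : ℂ) ^ n)) * P a b := by ring
        _ = P a b := by rw [hcancel, one_mul]
    have homegan : g n = Q := by
      funext a b
      show (c : ℂ) * (fA n Q a b * gA n P a b) = Q a b
      rw [fA_top, gA_top, htrP]
      calc (c : ℂ) * ((d : ℂ) ^ n * Q a b * (t : ℂ))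
          = ((c : ℂ) * (t : ℂ) * ((d : ℂ) ^ n)) * Q a b := by ring
        _ = Q a b := by rw [hcancel, one_mul]
    have hpsd : ∀ k, (g k).PosSemidef := fun k => omegaM_posSemidef hcpos.le hQ hP k
    have htrg : ∀ k, ((g k).trace).re = t := by
      intro k
      rw [hg, trace_omegaM c Q P k hd0, htrP, htrQ, ← htt']
      have : (c : ℂ) * ((d : ℂ) ^ n * ((t : ℂ) * (t : ℂ)))
          = ((c : ℂ) * (t : ℂ) * ((d : ℂ) ^ n)) * (t : ℂ) := by ring
      rw [this, hcancel, one_mul, Complex.ofReal_re]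
    refine ⟨fun i => g (i : ℕ) - g ((i : ℕ) + 1), fun i => ?_, fun i => ?_, ?_, ?_⟩
    · exact ((hpsd (i : ℕ)).1).sub ((hpsd ((i : ℕ) + 1)).1)
    · rw [ptrace_sub, hg, ptrace_omegaM_eq hd0 c Q P i, sub_self]
    · rw [Fin.sum_univ_eq_sum_range (fun k => g k - g (k + 1)) n,
        Finset.sum_range_sub' (fun k => g k) n, homega0, homegan, ← hXPQ]
    · have hbd : ∀ i : Fin n, traceNorm (g (i : ℕ) - g ((i : ℕ) + 1)) ≤ traceNorm X := by
        intro i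
        calc traceNorm (g (i : ℕ) - g ((i : ℕ) + 1))
            ≤ ((g (i : ℕ)).trace).re + ((g ((i : ℕ) + 1)).trace).re :=
              traceNorm_sub_le_of_psd (hpsd _) (hpsd _)
          _ = t + t := by rw [htrg, htrg]
          _ = traceNorm X := h2t
      calc ∑ i : Fin n, traceNorm (g (i : ℕ) - g ((i : ℕ) + 1))
          ≤ ∑ _i : Fin n, traceNorm X := Finset.sum_le_sum fun i _ => hbd i
        _ = (n : ℝ) * traceNorm X := by
            rw [Finset.sum_const, Finset.card_univ, Fintype.card_fin, nsmul_eq_mul]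

end

theorem stmt7 {d n : ℕ} (hd : 2 ≤ d) (hn : 1 ≤ n)
    (X : Mat d n) (hX : X.IsHermitian) (hXtr : X.trace = 0) :
    (1 / 2) * traceNorm X ≤ W1 X ∧ W1 X ≤ ((n : ℝ) / 2) * traceNorm X := by
  obtain ⟨Y, hherm, hpt, hXsum, hbound⟩ := exists_decomp hd X hX hXtr
  have hmem : (1 / 2 : ℝ) * ∑ i, traceNorm (Y i) ∈ W1Set X := ⟨Y, hherm, hpt, hXsum, rfl⟩
  have hne : (W1Set X).Nonempty := ⟨_, hmem⟩
  have hlb : ∀ r ∈ W1Set X, (1 / 2 : ℝ) * traceNorm X ≤ r := by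
    rintro r ⟨Z, hZh, hZp, hZsum, rfl⟩
    have h1 : traceNorm X ≤ ∑ i, traceNorm (Z i) := by
      rw [hZsum]
      exact traceNorm_sum_le Z hZh
    linarith
  have hbdd : BddBelow (W1Set X) := by
    refine ⟨0, ?_⟩
    rintro r ⟨Z, hZh, -, -, rfl⟩
    have : 0 ≤ ∑ i, traceNorm (Z i) := Finset.sum_nonneg fun i _ => traceNorm_nonneg' (hZh i)
    linarith
  constructor
  · rw [W1]
    exact le_csInf hne hlb
  · have h1 : W1 X ≤ (1 / 2 : ℝ) * ∑ i, traceNorm (Y i) := by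
      rw [W1]
      exact csInf_le hbdd hmem
    have h2 : (1 / 2 : ℝ) * ∑ i, traceNorm (Y i) ≤ ((n : ℝ) / 2) * traceNorm X := by
      linarith [hbound]
    exact le_trans h1 h2

end QW1
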